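/- Let d be a pseudo-metric on N ∪ C and P ⊆ N a k-set of agents. For alternatives a, c' ∈ C with D = d(a,c'), the random variable SC(P,c') − SC(P,a) (for P chosen uniformly among k-subsets of N) has expectation −(k/n)(SC(a) − SC(c')), and Pr[SC(P,c') ≥ SC(P,a)] ≤ exp(−2k·(SC(a) − SC(c'))²/(n²·(2D)²)). -/

import Mathlib

-- tangent line under convex power
lemma tangent_pow (m : ℕ) {t u : ℝ} (ht : 0 ≤ t) (hu : 0 ≤ u) :
    t ^ (m+1) + (m+1 : ℝ) * t ^ m * (u - t) ≤ u ^ (m+1) := by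
  rcases eq_or_lt_of_le ht with h0 | h0
  · rcases Nat.eq_zero_or_pos m with rfl | hm
    · simp [← h0]
    · rw [← h0]
      rw [zero_pow hm.ne']
      simp [zero_pow (Nat.succ_ne_zero m)]
      positivity
  · have ha : (-2 : ℝ) ≤ u / t - 1 := by
      have : 0 ≤ u / t := div_nonneg hu h0.le
      linarith
    have hb := one_add_mul_le_pow ha (m+1)
    have h1 : (1 + (u/t - 1)) = u / t := by ring
    rw [h1] at hb
    have h2 : (u/t)^(m+1) = u^(m+1) / t^(m+1) := div_pow u t (m+1)
    rw [h2] at hb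
    have h3 : t^(m+1) > 0 := pow_pos h0 _
    have hb' := mul_le_mul_of_nonneg_right hb h3.le
    rw [div_mul_cancel₀ _ h3.ne'] at hb'
    calc t ^ (m+1) + (m+1 : ℝ) * t ^ m * (u - t)
        = (1 + (↑(m+1)) * (u/t - 1)) * t^(m+1) := by
          push_cast
          field_simp
          ring
      _ ≤ u^(m+1) := hb'

lemma maclaurin {V : Type*} [DecidableEq V] (s : Finset V) (x : V → ℝ)
    (hx : ∀ i ∈ s, 0 ≤ x i) (k : ℕ) :
    ∑ P ∈ s.powersetCard k, ∏ i ∈ P, x i ≤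
      (s.card.choose k : ℝ) * ((∑ i ∈ s, x i) / s.card) ^ k := by
  induction s using Finset.induction_on generalizing k with
  | empty =>
    rcases Nat.eq_zero_or_pos k with rfl | hk
    · simp
    · rw [Finset.powersetCard_eq_empty.2 (by simpa using hk)]
      simp [Nat.choose_eq_zero_of_lt (by simpa using hk)]
  | @insert a s' ha ih =>
    have hx' : ∀ i ∈ s', 0 ≤ x i := fun i hi => hx i (Finset.mem_insert_of_mem hi)
    have hxa : 0 ≤ x a := hx a (Finset.mem_insert_self a s')
    have hS' : 0 ≤ ∑ i ∈ s', x i := Finset.sum_nonneg hx'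
    rcases Nat.eq_zero_or_pos k with rfl | hk
    · simp
    obtain ⟨m, rfl⟩ := Nat.exists_eq_add_of_lt hk
    simp only [Nat.zero_add] at *
    -- split the powerset sum
    have hsplit : ∑ P ∈ (insert a s').powersetCard (m+1), ∏ i ∈ P, x i =
        (∑ P ∈ s'.powersetCard (m+1), ∏ i ∈ P, x i) +
        x a * ∑ P ∈ s'.powersetCard m, ∏ i ∈ P, x i := by
      rw [Finset.powersetCard_succ_insert ha]
      rw [Finset.sum_union]
      · congr 1
        rw [Finset.sum_image]
        · rw [Finset.mul_sum]
          refine Finset.sum_congr rfl fun P hP => ?_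
          have haP : a ∉ P := fun h => ha ((Finset.mem_powersetCard.1 hP).1 h)
          rw [Finset.prod_insert haP]
        · intro P hP Q hQ hPQ
          have haP : a ∉ P := fun h => ha ((Finset.mem_powersetCard.1 hP).1 h)
          have haQ : a ∉ Q := fun h => ha ((Finset.mem_powersetCard.1 hQ).1 h)
          have := congrArg (fun t => Finset.erase t a) hPQ
          simpa [Finset.erase_insert haP, Finset.erase_insert haQ] using this
      · rw [Finset.disjoint_right]
        intro P hP hP'
        obtain ⟨Q, hQ, rfl⟩ := Finset.mem_image.1 hP
        have : a ∈ insert a Q := Finset.mem_insert_self a Q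
        exact ha ((Finset.mem_powersetCard.1 hP').1 this)
    rw [hsplit]
    rcases Nat.eq_zero_or_pos s'.card with hc0 | hcpos
    · -- s' is empty
      have hs'e : s' = ∅ := Finset.card_eq_zero.1 hc0
      subst hs'e
      rcases m with _ | m
      · have h1 : Finset.powersetCard 1 (∅ : Finset V) = ∅ :=
          Finset.powersetCard_eq_empty.2 (by simp)
        simp [h1]
      · have h1 : Finset.powersetCard (m+1+1) (∅ : Finset V) = ∅ :=
          Finset.powersetCard_eq_empty.2 (by simp)
        have h2 : Finset.powersetCard (m+1) (∅ : Finset V) = ∅ :=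
          Finset.powersetCard_eq_empty.2 (by simp)
        rw [h1, h2]
        simp
        positivity
    · -- main case
      set n' := s'.card with hn'
      set S' := ∑ i ∈ s', x i with hS'def
      set t := S' / n' with htdef
      set u := (S' + x a) / ((n' : ℝ) + 1) with hudef
      have ht : 0 ≤ t := div_nonneg hS' (Nat.cast_nonneg _)
      have hu : 0 ≤ u := div_nonneg (by linarith) (by positivity)
      have hn'pos : (0:ℝ) < n' := by exact_mod_cast hcpos
      have hne : ((n':ℝ) + 1) ≠ 0 := by positivity
      have step1 : (∑ P ∈ s'.powersetCard (m+1), ∏ i ∈ P, x i) +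
          x a * ∑ P ∈ s'.powersetCard m, ∏ i ∈ P, x i ≤
          (n'.choose (m+1) : ℝ) * t^(m+1) + x a * ((n'.choose m : ℝ) * t^m) :=
        add_le_add (ih hx' (m+1)) (mul_le_mul_of_nonneg_left (ih hx' m) hxa)
      have hPascal : ((n'+1).choose (m+1) : ℝ) = (n'.choose m : ℝ) + (n'.choose (m+1) : ℝ) := by
        exact_mod_cast congrArg (Nat.cast : ℕ → ℝ) (Nat.choose_succ_succ n' m)
      have hId : ((m:ℝ)+1) * ((n'+1).choose (m+1) : ℝ) = ((n':ℝ)+1) * (n'.choose m : ℝ) := by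
        have h2 : (n' + 1) * n'.choose m = (n'+1).choose (m+1) * (m+1) := Nat.add_one_mul_choose_eq n' m
        have h3 := congrArg (Nat.cast : ℕ → ℝ) h2
        push_cast at h3
        linarith
      set w := u - t with hwdef
      have hw : ((n':ℝ)+1) * w = x a - t := by
        rw [hwdef, hudef, htdef]
        field_simp
        ring
      have E : (n'.choose (m+1) : ℝ) * t^(m+1) + x a * ((n'.choose m : ℝ) * t^m) =
          ((n'+1).choose (m+1) : ℝ) * (t^(m+1) + ((m:ℝ)+1) * t^m * w) := by
        linear_combination (-(t^(m+1))) * hPascal + (-(t^m*w)) * hId +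
          (-((n'.choose m : ℝ) * t^m)) * hw
      have step3 : ((n'+1).choose (m+1) : ℝ) * (t^(m+1) + ((m:ℝ)+1) * t^m * w) ≤
          ((n'+1).choose (m+1) : ℝ) * u^(m+1) := by
        apply mul_le_mul_of_nonneg_left _ (Nat.cast_nonneg _)
        have h := tangent_pow m ht hu
        push_cast at h
        rw [hwdef]
        linarith
      have hcard : (insert a s').card = n' + 1 := Finset.card_insert_of_notMem ha
      have hsum : ∑ i ∈ insert a s', x i = S' + x a := Finset.sum_insert ha |>.trans (by ring)
      rw [hcard, hsum]
      calc (∑ P ∈ s'.powersetCard (m+1), ∏ i ∈ P, x i) +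
              x a * ∑ P ∈ s'.powersetCard m, ∏ i ∈ P, x i
          ≤ ((n'+1).choose (m+1) : ℝ) * u^(m+1) := le_trans step1 (by rw [E]; exact step3)
        _ = _ := by rw [hudef]; norm_cast


lemma count_filter_mem {V : Type*} [DecidableEq V] (s : Finset V) (k : ℕ) (i : V) (hi : i ∈ s) :
    ((s.powersetCard (k+1)).filter (fun P => i ∈ P)).card = (s.card - 1).choose k := by
  rw [← Finset.card_erase_of_mem hi, ← Finset.card_powersetCard k (s.erase i)]
  refine Finset.card_bij' (fun P _ => P.erase i) (fun Q _ => insert i Q) ?_ ?_ ?_ ?_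
  · intro P hP
    simp only [Finset.mem_filter, Finset.mem_powersetCard] at hP
    obtain ⟨⟨hPs, hPc⟩, hiP⟩ := hP
    rw [Finset.mem_powersetCard]
    constructor
    · intro j hj
      rw [Finset.mem_erase] at hj ⊢
      exact ⟨hj.1, hPs hj.2⟩
    · rw [Finset.card_erase_of_mem hiP, hPc]; simp
  · intro Q hQ
    rw [Finset.mem_powersetCard] at hQ
    obtain ⟨hQs, hQc⟩ := hQ
    have hiQ : i ∉ Q := fun h => (Finset.mem_erase.1 (hQs h)).1 rfl
    simp only [Finset.mem_filter, Finset.mem_powersetCard]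
    refine ⟨⟨?_, ?_⟩, Finset.mem_insert_self i Q⟩
    · intro j hj
      rcases Finset.mem_insert.1 hj with rfl | hj
      · exact hi
      · exact (Finset.erase_subset i s) (hQs hj)
    · rw [Finset.card_insert_of_notMem hiQ, hQc]
  · intro P hP
    simp only [Finset.mem_filter] at hP
    exact Finset.insert_erase hP.2
  · intro Q hQ
    rw [Finset.mem_powersetCard] at hQ
    have hiQ : i ∉ Q := fun h => (Finset.mem_erase.1 (hQ.1 h)).1 rfl
    exact Finset.erase_insert hiQ

lemma sum_powersetCard_sum {V : Type*} [DecidableEq V] (s : Finset V) (k : ℕ) (g : V → ℝ) :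
    ∑ P ∈ s.powersetCard (k+1), ∑ i ∈ P, g i =
      ((s.card - 1).choose k : ℝ) * ∑ i ∈ s, g i := by
  have h1 : ∀ P ∈ s.powersetCard (k+1), ∑ i ∈ P, g i =
      ∑ i ∈ s, if i ∈ P then g i else 0 := by
    intro P hP
    rw [Finset.sum_ite_mem]
    congr 1
    exact (Finset.inter_eq_right.2 (Finset.mem_powersetCard.1 hP).1).symm
  rw [Finset.sum_congr rfl h1, Finset.sum_comm]
  rw [Finset.mul_sum]
  refine Finset.sum_congr rfl fun i hi => ?_
  rw [Finset.sum_ite, Finset.sum_const_zero, add_zero, Finset.sum_const,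
    count_filter_mem s k i hi]
  simp [mul_comm]

/-- For a uniformly random `k`-subset `P` of the agents `N`,
the variable `SC(P,c') − SC(P,a)` has expectation `−(k/n)(SC(a) − SC(c'))`,
and (for `a` with `SC(a) ≥ SC(c')`, as in the paper where `a ∉ W`)
`Pr[SC(P,c') ≥ SC(P,a)] ≤ exp(−2k(SC(a) − SC(c'))²/(n²(2D)²))`, `D = d(a,c')`. -/
theorem stmt_19 {V : Type*} [DecidableEq V] (d : V → V → ℝ)
    (hsymm : ∀ x y, d x y = d y x)
    (htri : ∀ x y z, d x z ≤ d x y + d y z)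
    (hnonneg : ∀ x y, 0 ≤ d x y)
    (N : Finset V) (n k : ℕ) (hn : N.card = n) (hkpos : 0 < k) (hkn : k ≤ n)
    (a c' : V) (D : ℝ) (hD : D = d a c')
    (hSC : ∑ i ∈ N, d i c' ≤ ∑ i ∈ N, d i a) :
    (((n.choose k : ℝ))⁻¹ *
        ∑ P ∈ N.powersetCard k, ((∑ i ∈ P, d i c') - ∑ i ∈ P, d i a) =
      -(((k : ℝ) / n) * ((∑ i ∈ N, d i a) - ∑ i ∈ N, d i c'))) ∧
    (((N.powersetCard k).filter
        (fun P => ∑ i ∈ P, d i c' ≥ ∑ i ∈ P, d i a)).card : ℝ) / (n.choose k : ℝ) ≤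
      Real.exp (-(2 * k * ((∑ i ∈ N, d i a) - ∑ i ∈ N, d i c') ^ 2) /
        ((n : ℝ) ^ 2 * (2 * D) ^ 2)) := by
  have hnpos : 0 < n := hkpos.trans_le hkn
  have hCpos : (0:ℝ) < (n.choose k : ℝ) := by exact_mod_cast Nat.choose_pos hkn
  have hnR : (0:ℝ) < (n:ℝ) := by exact_mod_cast hnpos
  have hD0 : 0 ≤ D := hD ▸ hnonneg a c'
  have hfub : ∀ i, d i c' - d i a ≤ D := fun i => by
    have h1 := htri i c' a
    have h2 := hsymm c' a
    rw [hD, ← h2]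
    linarith [htri i a c', hsymm a c']
  have hflb : ∀ i, -D ≤ d i c' - d i a := fun i => by
    have h1 := htri i c' a
    have h2 := hsymm c' a
    have : d i a ≤ d i c' + d a c' := by rw [← h2] at *; linarith
    rw [hD]; linarith
  constructor
  · -- Part 1: expectation
    obtain ⟨k', rfl⟩ : ∃ k', k = k' + 1 := ⟨k - 1, (Nat.succ_pred_eq_of_pos hkpos).symm⟩
    obtain ⟨n'', hn''⟩ : ∃ m, n = m + 1 := ⟨n - 1, (Nat.succ_pred_eq_of_pos hnpos).symm⟩
    subst hn''
    have hsum : ∑ P ∈ N.powersetCard (k'+1), ((∑ i ∈ P, d i c') - ∑ i ∈ P, d i a) =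
        ((n''.choose k' : ℝ)) * ((∑ i ∈ N, d i c') - ∑ i ∈ N, d i a) := by
      have h := sum_powersetCard_sum N k' (fun i => d i c' - d i a)
      rw [hn, Nat.add_sub_cancel] at h
      rw [← Finset.sum_sub_distrib, ← h]
      exact Finset.sum_congr rfl fun P _ => (Finset.sum_sub_distrib _ _).symm
    rw [hsum]
    have hratio : ((n''+1 : ℕ):ℝ) * (n''.choose k' : ℝ) =
        ((n''+1).choose (k'+1) : ℝ) * ((k'+1 : ℕ):ℝ) := by
      exact_mod_cast congrArg (Nat.cast : ℕ → ℝ) (Nat.add_one_mul_choose_eq n'' k')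
    have hCne : ((n''+1).choose (k'+1) : ℝ) ≠ 0 := hCpos.ne'
    have hnne : ((n''+1 : ℕ):ℝ) ≠ 0 := hnR.ne'
    field_simp
    push_cast at hratio ⊢
    linear_combination ((∑ i ∈ N, d i c') - ∑ i ∈ N, d i a) * hratio
  · -- Part 2: concentration
    set A := ∑ i ∈ N, d i a with hA
    set B := ∑ i ∈ N, d i c' with hB
    have hΔ : 0 ≤ A - B := by linarith
    have hcard_le : ((N.powersetCard k).filter
        (fun P => ∑ i ∈ P, d i c' ≥ ∑ i ∈ P, d i a)).card ≤ n.choose k := by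
      rw [← hn, ← Finset.card_powersetCard k N]
      exact Finset.card_filter_le _ _
    rcases eq_or_lt_of_le hD0 with hDeq | hDpos
    · -- D = 0 : RHS is exp 0 = 1
      rw [← hDeq]
      norm_num
      rw [div_le_one hCpos]
      exact_mod_cast hcard_le
    -- D > 0
    have hΔub : A - B ≤ n * D := by
      have h1 : A - B = ∑ i ∈ N, (d i a - d i c') := (Finset.sum_sub_distrib _ _).symm
      have h2 : ∑ i ∈ N, (d i a - d i c') ≤ ∑ i ∈ N, D :=
        Finset.sum_le_sum fun i _ => by have := hflb i; linarith
      rw [Finset.sum_const, hn] at h2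
      rw [h1]
      simpa [mul_comm] using h2
    rcases lt_or_eq_of_le hΔub with hlt | heqq
    · -- main case : A - B < n * D
      set m := (A - B) / ((n:ℝ) * D) with hm
      have hnD : (0:ℝ) < (n:ℝ) * D := by positivity
      have hm0 : 0 ≤ m := div_nonneg hΔ hnD.le
      have hm1 : m < 1 := (div_lt_one hnD).2 hlt
      have h1m : (0:ℝ) < 1 - m := by linarith
      have h1p : (0:ℝ) < 1 + m := by linarith
      set r := Real.sqrt ((1+m)/(1-m)) with hr
      have hrat1 : (1:ℝ) ≤ (1+m)/(1-m) := (le_div_iff₀ h1m).2 (by linarith)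
      have hrpos : 0 < r := Real.sqrt_pos.2 (by positivity)
      have hr1 : 1 ≤ r := by
        have h := Real.sqrt_le_sqrt hrat1
        rwa [Real.sqrt_one] at h
      have hrsq : r^2 = (1+m)/(1-m) := Real.sq_sqrt (by positivity)
      set lam := Real.log r / D with hlam
      have hlam0 : 0 ≤ lam := div_nonneg (Real.log_nonneg hr1) hD0
      have helamD : Real.exp (lam * D) = r := by
        rw [hlam, div_mul_cancel₀ _ hDpos.ne', Real.exp_log hrpos]
      have helamD' : Real.exp (-(lam * D)) = r⁻¹ := by
        rw [Real.exp_neg, helamD]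
      clear_value m r lam
      -- chord bound, summed
      have hchord : ∀ i, Real.exp (lam * (d i c' - d i a)) ≤
          ((D - (d i c' - d i a))/(2*D)) * r⁻¹ + ((D + (d i c' - d i a))/(2*D)) * r := by
        intro i
        have hy1 := hfub i
        have hy2 := hflb i
        have h2D : (2*D) ≠ 0 := by positivity
        have ha0 : (0:ℝ) ≤ (D - (d i c' - d i a))/(2*D) :=
          div_nonneg (by linarith) (by positivity)
        have hb0 : (0:ℝ) ≤ (D + (d i c' - d i a))/(2*D) :=
          div_nonneg (by linarith) (by positivity)
        have hab : (D - (d i c' - d i a))/(2*D) + (D + (d i c' - d i a))/(2*D) = 1 := by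
          field_simp
          ring
        have hcvx := convexOn_exp.2 (Set.mem_univ (-(lam * D))) (Set.mem_univ (lam * D))
          ha0 hb0 hab
        simp only [smul_eq_mul] at hcvx
        have harg : (D - (d i c' - d i a))/(2*D) * (-(lam * D)) +
            (D + (d i c' - d i a))/(2*D) * (lam * D) = lam * (d i c' - d i a) := by
          rw [div_mul_eq_mul_div, div_mul_eq_mul_div, ← add_div]
          rw [show (D - (d i c' - d i a)) * -(lam * D) +
              (D + (d i c' - d i a)) * (lam * D) = (lam * (d i c' - d i a)) * (2*D) by ring]
          exact mul_div_cancel_right₀ _ h2D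
        rw [harg, helamD, helamD'] at hcvx
        exact hcvx
      have hsumf : ∑ i ∈ N, (d i c' - d i a) = B - A := Finset.sum_sub_distrib _ _
      have hsum_chord : ∑ i ∈ N, Real.exp (lam * (d i c' - d i a)) ≤
          (n:ℝ) * Real.sqrt ((1+m)*(1-m)) := by
        have h1 : ∑ i ∈ N, Real.exp (lam * (d i c' - d i a)) ≤
            ∑ i ∈ N, (((D - (d i c' - d i a))/(2*D)) * r⁻¹ +
              ((D + (d i c' - d i a))/(2*D)) * r) :=
          Finset.sum_le_sum fun i _ => hchord i
        have h2 : ∑ i ∈ N, (((D - (d i c' - d i a))/(2*D)) * r⁻¹ +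
              ((D + (d i c' - d i a))/(2*D)) * r) =
            ((n:ℝ) * D - (B - A))/(2*D) * r⁻¹ + ((n:ℝ) * D + (B - A))/(2*D) * r := by
          rw [Finset.sum_add_distrib, ← Finset.sum_mul, ← Finset.sum_mul]
          rw [← Finset.sum_div, ← Finset.sum_div, Finset.sum_sub_distrib,
            Finset.sum_add_distrib, Finset.sum_const, hn, hsumf]
          simp [mul_comm]
        have hADm : B - A = -(m * ((n:ℝ) * D)) := by
          rw [hm]; field_simp; ring
        have h3 : ((n:ℝ) * D - (B - A))/(2*D) * r⁻¹ + ((n:ℝ) * D + (B - A))/(2*D) * r =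
            (n:ℝ) * (((1+m) / r + (1-m) * r) / 2) := by
          rw [hADm]
          field_simp
          ring
        have hkey : (1+m) / r = Real.sqrt ((1+m)*(1-m)) := by
          rw [show (1+m)*(1-m) = ((1+m)/r)^2 by
            rw [div_pow, hrsq]; field_simp]
          rw [Real.sqrt_sq (by positivity)]
        have hkey2 : (1-m) * r = Real.sqrt ((1+m)*(1-m)) := by
          rw [show (1+m)*(1-m) = ((1-m)*r)^2 by
            rw [mul_pow, hrsq]; field_simp]
          rw [Real.sqrt_sq (by positivity)]
        have h4 : (((1+m) / r + (1-m) * r) / 2) = Real.sqrt ((1+m)*(1-m)) := by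
          rw [hkey, hkey2]; ring
        calc ∑ i ∈ N, Real.exp (lam * (d i c' - d i a)) ≤ _ := h1
          _ = _ := h2
          _ = (n:ℝ) * (((1+m) / r + (1-m) * r) / 2) := h3
          _ = (n:ℝ) * Real.sqrt ((1+m)*(1-m)) := by rw [h4]
      -- Chernoff
      have hstep1 : (((N.powersetCard k).filter
          (fun P => ∑ i ∈ P, d i c' ≥ ∑ i ∈ P, d i a)).card : ℝ) ≤
          ∑ P ∈ N.powersetCard k, ∏ i ∈ P, Real.exp (lam * (d i c' - d i a)) := by
        have hprod : ∀ P : Finset V, ∏ i ∈ P, Real.exp (lam * (d i c' - d i a)) =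
            Real.exp (lam * ((∑ i ∈ P, d i c') - ∑ i ∈ P, d i a)) := by
          intro P
          rw [← Real.exp_sum]
          congr 1
          rw [← Finset.sum_sub_distrib, Finset.mul_sum]
        calc (((N.powersetCard k).filter
            (fun P => ∑ i ∈ P, d i c' ≥ ∑ i ∈ P, d i a)).card : ℝ)
            = ∑ P ∈ (N.powersetCard k).filter
                (fun P => ∑ i ∈ P, d i c' ≥ ∑ i ∈ P, d i a), (1:ℝ) := by simp
          _ ≤ ∑ P ∈ (N.powersetCard k).filter
                (fun P => ∑ i ∈ P, d i c' ≥ ∑ i ∈ P, d i a),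
                ∏ i ∈ P, Real.exp (lam * (d i c' - d i a)) := by
              refine Finset.sum_le_sum fun P hP => ?_
              rw [hprod]
              refine Real.one_le_exp ?_
              have hge := (Finset.mem_filter.1 hP).2
              have : (0:ℝ) ≤ (∑ i ∈ P, d i c') - ∑ i ∈ P, d i a := by
                simpa using sub_nonneg.2 hge
              positivity
          _ ≤ _ := by
              refine Finset.sum_le_sum_of_subset_of_nonneg
                (Finset.filter_subset _ _) fun P _ _ => ?_
              exact Finset.prod_nonneg fun i _ => (Real.exp_pos _).le
      have hstep2 := maclaurin N (fun i => Real.exp (lam * (d i c' - d i a)))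
        (fun i _ => (Real.exp_pos _).le) k
      rw [hn] at hstep2
      -- combine
      have hbase : (0:ℝ) ≤ (∑ i ∈ N, Real.exp (lam * (d i c' - d i a))) / (n:ℝ) := by
        positivity
      have hsqrt_le : Real.sqrt ((1+m)*(1-m)) ≤ Real.exp (-(m^2)/2) := by
        have h5 : (1+m)*(1-m) ≤ Real.exp (-(m^2)) := by
          have := Real.add_one_le_exp (-(m^2))
          nlinarith
        have h6 : Real.sqrt (Real.exp (-(m^2))) = Real.exp (-(m^2)/2) := by
          have h7 : (Real.exp (-(m^2)/2))^2 = Real.exp (-(m^2)) := by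
            rw [pow_two, ← Real.exp_add]; congr 1; ring
          rw [← h7, Real.sqrt_sq (Real.exp_pos _).le]
        calc Real.sqrt ((1+m)*(1-m)) ≤ Real.sqrt (Real.exp (-(m^2))) :=
              Real.sqrt_le_sqrt h5
          _ = _ := h6
      have hstep3 : ((∑ i ∈ N, Real.exp (lam * (d i c' - d i a))) / (n:ℝ)) ^ k ≤
          (Real.exp (-(m^2)/2)) ^ k := by
        refine pow_le_pow_left₀ hbase ?_ k
        calc (∑ i ∈ N, Real.exp (lam * (d i c' - d i a))) / (n:ℝ)
            ≤ ((n:ℝ) * Real.sqrt ((1+m)*(1-m))) / (n:ℝ) :=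
              (div_le_div_iff_of_pos_right hnR).2 hsum_chord
          _ = Real.sqrt ((1+m)*(1-m)) := by field_simp
          _ ≤ _ := hsqrt_le
      have hfin : (((N.powersetCard k).filter
          (fun P => ∑ i ∈ P, d i c' ≥ ∑ i ∈ P, d i a)).card : ℝ) ≤
          (n.choose k : ℝ) * Real.exp (-(k * m^2)/2) := by
        have := le_trans hstep1 hstep2
        have h7 : (Real.exp (-(m^2)/2)) ^ k = Real.exp (-(k * m^2)/2) := by
          rw [← Real.exp_nat_mul]
          congr 1
          ring
        calc (((N.powersetCard k).filter
            (fun P => ∑ i ∈ P, d i c' ≥ ∑ i ∈ P, d i a)).card : ℝ)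
            ≤ (n.choose k : ℝ) *
              ((∑ i ∈ N, Real.exp (lam * (d i c' - d i a))) / (n:ℝ)) ^ k := this
          _ ≤ (n.choose k : ℝ) * (Real.exp (-(m^2)/2)) ^ k :=
              mul_le_mul_of_nonneg_left hstep3 (Nat.cast_nonneg _)
          _ = _ := by rw [h7]
      have hexp_eq : -(2 * (k:ℝ) * (A - B) ^ 2) / ((n : ℝ) ^ 2 * (2 * D) ^ 2) =
          -((k:ℝ) * m^2)/2 := by
        rw [hm]
        field_simp
      rw [div_le_iff₀ hCpos, hexp_eq]
      linarith [hfin]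
    · -- degenerate case A - B = n * D : the filter is empty
      have hall : ∀ i ∈ N, d i a - d i c' = D := by
        have hz : ∑ i ∈ N, (D - (d i a - d i c')) = 0 := by
          rw [Finset.sum_sub_distrib, Finset.sum_const, hn, Finset.sum_sub_distrib,
            nsmul_eq_mul, ← hA, ← hB]
          linarith [heqq]
        intro i hi
        have := (Finset.sum_eq_zero_iff_of_nonneg
          (fun j _ => by have := hflb j; linarith)).1 hz i hi
        linarith
      have hempty : (N.powersetCard k).filter
          (fun P => ∑ i ∈ P, d i c' ≥ ∑ i ∈ P, d i a) = ∅ := by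
        rw [Finset.filter_eq_empty_iff]
        intro P hP
        rw [Finset.mem_powersetCard] at hP
        have hsub : ∑ i ∈ P, (d i a - d i c') = k * D := by
          rw [Finset.sum_congr rfl (fun i hi => hall i (hP.1 hi)),
            Finset.sum_const, hP.2]
          simp
        have hkD : (0:ℝ) < k * D := by positivity
        simp only [ge_iff_le, not_le]
        have : ∑ i ∈ P, (d i a - d i c') = (∑ i ∈ P, d i a) - ∑ i ∈ P, d i c' :=
          Finset.sum_sub_distrib _ _
        linarith [hsub, this]
      rw [hempty]
      simp
      positivity
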